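/- Let n ≥ 1, R > 0 and 0 < a < 1. Let μ_i (i ∈ ℕ) and μ be finite Borel measures on ℝ^{n+1} all supported in the closed ball of radius R centered at the origin, with μ ≠ 0. If μ_i converges weakly to μ, then the local entropies on the unbounded scale interval converge: λ^{[a,∞)}(μ_i) → λ^{[a,∞)}(μ) as i → ∞. -/

import Mathlib

open MeasureTheory Metric Set Filter

/-- The F-functional `F_{x₀,t₀}(μ) = (4π t₀)^{-n/2} ∫ exp(-‖x-x₀‖²/(4t₀)) dμ(x)`. -/
noncomputable def Ffn (n : ℕ) (μ : Measure (EuclideanSpace ℝ (Fin (n + 1))))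
    (x₀ : EuclideanSpace ℝ (Fin (n + 1))) (t₀ : ℝ) : ℝ :=
  (4 * Real.pi * t₀) ^ (-(n : ℝ) / 2) *
    ∫ x, Real.exp (-‖x - x₀‖ ^ 2 / (4 * t₀)) ∂μ

/-- The local entropy `λ^I(μ) = sup {F_{x₀,t₀}(μ) : x₀ ∈ ℝ^{n+1}, t₀ ∈ I}`. -/
noncomputable def localEntropyR (n : ℕ) (I : Set ℝ)
    (μ : Measure (EuclideanSpace ℝ (Fin (n + 1)))) : ℝ :=
  ⨆ (x₀ : EuclideanSpace ℝ (Fin (n + 1))) (t₀ : I), Ffn n μ x₀ (t₀ : ℝ)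

variable {n : ℕ}

local notation "E" => EuclideanSpace ℝ (Fin (n + 1))

/-- The kernel as a function of the parameter pair `p = (x₀, t₀)`. -/
noncomputable def Gk (n : ℕ) (p : EuclideanSpace ℝ (Fin (n + 1)) × ℝ)
    (x : EuclideanSpace ℝ (Fin (n + 1))) : ℝ :=
  (4 * Real.pi * p.2) ^ (-(n : ℝ) / 2) * Real.exp (-‖x - p.1‖ ^ 2 / (4 * p.2))

lemma Gk_nonneg {p : E × ℝ} (ht : 0 ≤ p.2) (x : E) : 0 ≤ Gk n p x := by
  apply mul_nonneg
  · exact Real.rpow_nonneg (by positivity) _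
  · exact (Real.exp_pos _).le

lemma exp_kernel_le_one {x x₀ : E} {t : ℝ} (ht : 0 < t) :
    Real.exp (-‖x - x₀‖ ^ 2 / (4 * t)) ≤ 1 := by
  rw [Real.exp_le_one_iff]
  apply div_nonpos_of_nonpos_of_nonneg
  · exact neg_nonpos.mpr (by positivity)
  · positivity

lemma Gk_le {p : E × ℝ} (ht : 0 < p.2) (x : E) :
    Gk n p x ≤ (4 * Real.pi * p.2) ^ (-(n : ℝ) / 2) := by
  have h1 : Real.exp (-‖x - p.1‖ ^ 2 / (4 * p.2)) ≤ 1 := exp_kernel_le_one ht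
  calc Gk n p x ≤ (4 * Real.pi * p.2) ^ (-(n : ℝ) / 2) * 1 :=
        mul_le_mul_of_nonneg_left h1 (Real.rpow_nonneg (by positivity) _)
    _ = _ := mul_one _

lemma continuous_exp_kernel (x₀ : E) (t : ℝ) :
    Continuous fun x : E => Real.exp (-‖x - x₀‖ ^ 2 / (4 * t)) := by
  fun_prop

lemma integrable_Gk (ν : Measure E) [IsFiniteMeasure ν] {p : E × ℝ} (ht : 0 < p.2) :
    Integrable (Gk n p) ν := by
  apply (integrable_const ((4 * Real.pi * p.2) ^ (-(n : ℝ) / 2))).mono'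
  · exact (continuous_const.mul (continuous_exp_kernel p.1 p.2)).aestronglyMeasurable
  · filter_upwards with x
    rw [Real.norm_eq_abs, abs_of_nonneg (Gk_nonneg ht.le x)]
    exact Gk_le ht x

lemma Ffn_eq (ν : Measure E) (p : E × ℝ) : Ffn n ν p.1 p.2 = ∫ x, Gk n p x ∂ν := by
  rw [Ffn]
  rw [← integral_const_mul]
  rfl

lemma ae_mem_ball {R : ℝ} (ν : Measure E)
    (hs : ν (closedBall (0 : E) R)ᶜ = 0) :
    ∀ᵐ x ∂ν, x ∈ closedBall (0 : E) R := by
  rw [ae_iff]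
  exact hs

lemma integral_Gk_nonneg (ν : Measure E) (p : E × ℝ) (ht : 0 ≤ p.2) :
    0 ≤ ∫ x, Gk n p x ∂ν :=
  integral_nonneg (Gk_nonneg ht)

lemma integral_Gk_le (ν : Measure E) [IsFiniteMeasure ν] {p : E × ℝ} (ht : 0 < p.2) :
    ∫ x, Gk n p x ∂ν ≤ (4 * Real.pi * p.2) ^ (-(n : ℝ) / 2) * (ν univ).toReal := by
  calc ∫ x, Gk n p x ∂ν ≤ ∫ _x, (4 * Real.pi * p.2) ^ (-(n : ℝ) / 2) ∂ν :=
        integral_mono (integrable_Gk ν ht) (integrable_const _) (Gk_le ht)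
    _ = (ν univ).toReal * (4 * Real.pi * p.2) ^ (-(n : ℝ) / 2) := by
        rw [integral_const]; simp [smul_eq_mul, measureReal_def]
    _ = _ := mul_comm _ _

lemma integral_Gk_lower {R : ℝ} (ν : Measure E) [IsFiniteMeasure ν]
    (hs : ν (closedBall (0 : E) R)ᶜ = 0) :
    (4 * Real.pi * 1) ^ (-(n : ℝ) / 2) * Real.exp (-R ^ 2 / (4 * 1)) * (ν univ).toReal
      ≤ ∫ x, Gk n ((0 : E), 1) x ∂ν := by
  have h : ∀ᵐ x ∂ν, (4 * Real.pi * 1) ^ (-(n : ℝ) / 2) * Real.exp (-R ^ 2 / (4 * 1))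
      ≤ Gk n ((0 : E), 1) x := by
    filter_upwards [ae_mem_ball ν hs] with x hx
    rw [Gk]
    apply mul_le_mul_of_nonneg_left _ (Real.rpow_nonneg (by positivity) _)
    apply Real.exp_le_exp.mpr
    rw [div_le_div_iff_of_pos_right (by norm_num), neg_le_neg_iff]
    have hx' : ‖x - (0 : E)‖ ≤ R := by simpa [dist_eq_norm] using hx
    exact pow_le_pow_left₀ (norm_nonneg _) hx' 2
  calc (4 * Real.pi * 1) ^ (-(n : ℝ) / 2) * Real.exp (-R ^ 2 / (4 * 1)) * (ν univ).toReal
      = ∫ _x, (4 * Real.pi * 1) ^ (-(n : ℝ) / 2) * Real.exp (-R ^ 2 / (4 * 1)) ∂ν := by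
        rw [integral_const]; simp [smul_eq_mul, mul_comm, measureReal_def]
    _ ≤ ∫ x, Gk n ((0 : E), 1) x ∂ν :=
        integral_mono_ae (integrable_const _) (integrable_Gk ν one_pos) h

lemma rpow_const_anti {s t : ℝ} (hs : 0 < s) (hst : s ≤ t) :
    (4 * Real.pi * t) ^ (-(n : ℝ) / 2) ≤ (4 * Real.pi * s) ^ (-(n : ℝ) / 2) := by
  apply Real.rpow_le_rpow_of_nonpos (by positivity)
  · nlinarith [Real.pi_pos]
  · have : (0:ℝ) ≤ (n : ℝ) := Nat.cast_nonneg n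
    linarith

lemma integral_Gk_far {R M T a : ℝ} (ν : Measure E) [IsFiniteMeasure ν]
    (hs : ν (closedBall (0 : E) R)ᶜ = 0) (hR : 0 ≤ R) (hRM : R ≤ M)
    (ha : 0 < a) {p : E × ℝ} (hpa : a ≤ p.2) (hpT : p.2 ≤ T) (hpM : M ≤ ‖p.1‖) :
    ∫ x, Gk n p x ∂ν ≤
      (4 * Real.pi * a) ^ (-(n : ℝ) / 2) * Real.exp (-(M - R) ^ 2 / (4 * T)) *
        (ν univ).toReal := by
  have hp2 : 0 < p.2 := lt_of_lt_of_le ha hpa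
  have hT : 0 < T := lt_of_lt_of_le hp2 hpT
  have h : ∀ᵐ x ∂ν, Gk n p x ≤
      (4 * Real.pi * a) ^ (-(n : ℝ) / 2) * Real.exp (-(M - R) ^ 2 / (4 * T)) := by
    filter_upwards [ae_mem_ball ν hs] with x hx
    have hx' : ‖x‖ ≤ R := by simpa [dist_eq_norm] using hx
    have hd : M - R ≤ ‖x - p.1‖ := by
      have h1 : ‖p.1‖ - ‖x‖ ≤ ‖p.1 - x‖ := norm_sub_norm_le _ _
      rw [norm_sub_rev] at h1
      linarith
    have hd2 : (M - R) ^ 2 ≤ ‖x - p.1‖ ^ 2 :=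
      pow_le_pow_left₀ (by linarith) hd 2
    rw [Gk]
    apply mul_le_mul (rpow_const_anti ha hpa) _ (Real.exp_pos _).le
      (Real.rpow_nonneg (by positivity) _)
    apply Real.exp_le_exp.mpr
    rw [neg_div, neg_div, neg_le_neg_iff]
    exact div_le_div₀ (by positivity) hd2 (by positivity) (by linarith)
  calc ∫ x, Gk n p x ∂ν
      ≤ ∫ _x, (4 * Real.pi * a) ^ (-(n : ℝ) / 2) * Real.exp (-(M - R) ^ 2 / (4 * T)) ∂ν :=
        integral_mono_ae (integrable_Gk ν hp2) (integrable_const _) h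
    _ = _ := by rw [integral_const]; simp [smul_eq_mul, mul_comm, measureReal_def]

lemma Ffn_le_B {a : ℝ} (ν : Measure E) [IsFiniteMeasure ν] (ha : 0 < a)
    (x₀ : E) {t : ℝ} (hat : a ≤ t) :
    Ffn n ν x₀ t ≤ (4 * Real.pi * a) ^ (-(n : ℝ) / 2) * (ν univ).toReal := by
  have h1 : Ffn n ν x₀ t = ∫ x, Gk n (x₀, t) x ∂ν := Ffn_eq ν (x₀, t)
  rw [h1]
  calc ∫ x, Gk n (x₀, t) x ∂ν
      ≤ (4 * Real.pi * t) ^ (-(n : ℝ) / 2) * (ν univ).toReal :=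
        integral_Gk_le ν (lt_of_lt_of_le ha hat)
    _ ≤ _ := mul_le_mul_of_nonneg_right (rpow_const_anti ha hat) ENNReal.toReal_nonneg

lemma Ffn_nonneg {a : ℝ} (ν : Measure E) (ha : 0 < a) (x₀ : E) {t : ℝ} (hat : a ≤ t) :
    0 ≤ Ffn n ν x₀ t := by
  rw [Ffn_eq ν (x₀, t)]
  exact integral_Gk_nonneg ν _ (by simpa using (lt_of_lt_of_le ha hat).le)

lemma localEntropy_eq_sup {a M T : ℝ} (ν : Measure E) [IsFiniteMeasure ν]
    (ha : 0 < a) (ha1 : a ≤ 1) (h1T : (1:ℝ) ≤ T) (hM : 0 ≤ M)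
    (htailT : ∀ p : E × ℝ, T ≤ p.2 → ∫ x, Gk n p x ∂ν ≤ ∫ x, Gk n ((0 : E), 1) x ∂ν)
    (htailM : ∀ p : E × ℝ, a ≤ p.2 → p.2 ≤ T → M < ‖p.1‖ →
      ∫ x, Gk n p x ∂ν ≤ ∫ x, Gk n ((0 : E), 1) x ∂ν) :
    localEntropyR n (Ici a) ν
      = ⨆ p : (closedBall (0 : E) M ×ˢ Icc a T : Set (E × ℝ)),
          ∫ x, Gk n (p : E × ℝ) x ∂ν := by
  set Q : Set (E × ℝ) := closedBall (0 : E) M ×ˢ Icc a T with hQ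
  have h01Q : ((0 : E), (1 : ℝ)) ∈ Q := by
    constructor
    · simpa using hM
    · exact ⟨ha1, h1T⟩
  haveI : Nonempty Q := ⟨⟨_, h01Q⟩⟩
  haveI : Nonempty (Ici a) := ⟨⟨a, mem_Ici.mpr le_rfl⟩⟩
  set B : ℝ := (4 * Real.pi * a) ^ (-(n : ℝ) / 2) * (ν univ).toReal with hB
  have hQle : ∀ p : Q, ∫ x, Gk n (p : E × ℝ) x ∂ν ≤ B := by
    rintro ⟨p, hp1, hp2⟩
    rw [← Ffn_eq ν p]
    exact Ffn_le_B ν ha _ hp2.1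
  have hQbdd : BddAbove (range fun p : Q => ∫ x, Gk n (p : E × ℝ) x ∂ν) := by
    refine ⟨B, ?_⟩
    rintro y ⟨p, rfl⟩
    exact hQle p
  have hinner_bdd : ∀ x₀ : E, BddAbove (range fun t : Ici a => Ffn n ν x₀ (t : ℝ)) := by
    intro x₀
    refine ⟨B, ?_⟩
    rintro y ⟨t, rfl⟩
    exact Ffn_le_B ν ha x₀ t.2
  have houter_bdd : BddAbove (range fun x₀ : E => ⨆ t : Ici a, Ffn n ν x₀ (t : ℝ)) := by
    refine ⟨B, ?_⟩
    rintro y ⟨x₀, rfl⟩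
    exact ciSup_le fun t => Ffn_le_B ν ha x₀ t.2
  apply le_antisymm
  · apply ciSup_le
    intro x₀
    apply ciSup_le
    rintro ⟨t, hat⟩
    rw [mem_Ici] at hat
    have key : ∫ x, Gk n (x₀, t) x ∂ν ≤ ⨆ p : Q, ∫ x, Gk n (p : E × ℝ) x ∂ν := by
      by_cases hT : t ≤ T
      · by_cases hMx : ‖x₀‖ ≤ M
        · have hmem : ((x₀, t) : E × ℝ) ∈ Q := by
            constructor
            · simpa [dist_eq_norm] using hMx
            · exact ⟨hat, hT⟩
          exact le_ciSup hQbdd ⟨_, hmem⟩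
        · exact le_trans (htailM (x₀, t) hat hT (not_le.mp hMx))
            (le_ciSup hQbdd ⟨_, h01Q⟩)
      · exact le_trans (htailT (x₀, t) (not_le.mp hT).le) (le_ciSup hQbdd ⟨_, h01Q⟩)
    calc Ffn n ν x₀ t = ∫ x, Gk n (x₀, t) x ∂ν := Ffn_eq ν (x₀, t)
      _ ≤ _ := key
  · apply ciSup_le
    rintro ⟨⟨x₀, t⟩, hmemQ⟩
    have h1 : (∫ x, Gk n (x₀, t) x ∂ν) = Ffn n ν x₀ t := (Ffn_eq ν (x₀, t)).symm
    rw [h1]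
    have h2 : Ffn n ν x₀ t ≤ ⨆ s : Ici a, Ffn n ν x₀ (s : ℝ) :=
      le_ciSup (hinner_bdd x₀) ⟨t, hmemQ.2.1⟩
    exact le_trans h2 (le_ciSup houter_bdd x₀)

/-- cutoff: equal to 1 on `closedBall 0 R`, compactly supported. -/
noncomputable def cutoff (n : ℕ) (R : ℝ) (x : EuclideanSpace ℝ (Fin (n + 1))) : ℝ :=
  max 0 (min 1 (2 - ‖x‖ / R))

lemma cutoff_continuous (R : ℝ) : Continuous (cutoff n R) := by
  unfold cutoff; fun_prop

lemma cutoff_compactSupport {R : ℝ} (hR : 0 < R) : HasCompactSupport (cutoff n R) := by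
  apply HasCompactSupport.intro (isCompact_closedBall (0 : E) (2 * R))
  intro x hx
  have h : 2 * R < ‖x‖ := by simpa [dist_eq_norm] using hx
  have h2 : 2 - ‖x‖ / R < 0 := by
    rw [sub_neg]
    rw [lt_div_iff₀ hR]
    linarith
  unfold cutoff
  rw [max_eq_left]
  exact le_of_lt (lt_of_le_of_lt (min_le_right _ _) h2)

lemma cutoff_eq_one {R : ℝ} (hR : 0 < R) {x : E} (hx : ‖x‖ ≤ R) : cutoff n R x = 1 := by
  have h : (1:ℝ) ≤ 2 - ‖x‖ / R := by
    have : ‖x‖ / R ≤ 1 := (div_le_one hR).mpr hx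
    linarith
  unfold cutoff
  rw [min_eq_left h, max_eq_right zero_le_one]

lemma integral_cutoff_mul {R : ℝ} (hR : 0 < R) (ν : Measure E)
    (hs : ν (closedBall (0 : E) R)ᶜ = 0) (f : E → ℝ) :
    ∫ x, cutoff n R x * f x ∂ν = ∫ x, f x ∂ν := by
  apply integral_congr_ae
  filter_upwards [ae_mem_ball ν hs] with x hx
  have hx' : ‖x‖ ≤ R := by simpa [dist_eq_norm] using hx
  rw [cutoff_eq_one hR hx', one_mul]

lemma integral_cutoff {R : ℝ} (hR : 0 < R) (ν : Measure E) [IsFiniteMeasure ν]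
    (hs : ν (closedBall (0 : E) R)ᶜ = 0) :
    ∫ x, cutoff n R x ∂ν = (ν univ).toReal := by
  have h : ∫ x, cutoff n R x ∂ν = ∫ _x, (1:ℝ) ∂ν := by
    apply integral_congr_ae
    filter_upwards [ae_mem_ball ν hs] with x hx
    exact cutoff_eq_one hR (by simpa [dist_eq_norm] using hx)
  rw [h, integral_const, smul_eq_mul, mul_one, measureReal_def]

lemma continuous_Gk (p : E × ℝ) : Continuous (Gk n p) :=
  continuous_const.mul (continuous_exp_kernel p.1 p.2)

lemma tendsto_mass {R : ℝ} (hR : 0 < R)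
    (μs : ℕ → Measure E) (μ : Measure E)
    [∀ i, IsFiniteMeasure (μs i)] [IsFiniteMeasure μ]
    (hsupp_i : ∀ i, μs i (closedBall (0 : E) R)ᶜ = 0)
    (hsupp : μ (closedBall (0 : E) R)ᶜ = 0)
    (hconv : ∀ g : E → ℝ, Continuous g → HasCompactSupport g →
      Tendsto (fun i => ∫ x, g x ∂(μs i)) atTop (nhds (∫ x, g x ∂μ))) :
    Tendsto (fun i => ((μs i) univ).toReal) atTop (nhds ((μ univ).toReal)) := by
  have h := hconv (cutoff n R) (cutoff_continuous R) (cutoff_compactSupport hR)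
  rw [integral_cutoff hR μ hsupp] at h
  exact h.congr fun i => integral_cutoff hR (μs i) (hsupp_i i)

lemma tendsto_integral_Gk {R : ℝ} (hR : 0 < R)
    (μs : ℕ → Measure E) (μ : Measure E)
    [∀ i, IsFiniteMeasure (μs i)] [IsFiniteMeasure μ]
    (hsupp_i : ∀ i, μs i (closedBall (0 : E) R)ᶜ = 0)
    (hsupp : μ (closedBall (0 : E) R)ᶜ = 0)
    (hconv : ∀ g : E → ℝ, Continuous g → HasCompactSupport g →
      Tendsto (fun i => ∫ x, g x ∂(μs i)) atTop (nhds (∫ x, g x ∂μ)))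
    (p : E × ℝ) :
    Tendsto (fun i => ∫ x, Gk n p x ∂(μs i)) atTop (nhds (∫ x, Gk n p x ∂μ)) := by
  have hg : Continuous fun x => cutoff n R x * Gk n p x :=
    (cutoff_continuous R).mul (continuous_Gk p)
  have hgc : HasCompactSupport fun x => cutoff n R x * Gk n p x :=
    (cutoff_compactSupport hR).mul_right
  have h := hconv _ hg hgc
  rw [integral_cutoff_mul hR μ hsupp] at h
  exact h.congr fun i => integral_cutoff_mul hR (μs i) (hsupp_i i) _

lemma exists_T (hn : 1 ≤ n) {β : ℝ} (hβ : 0 < β) :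
    ∃ T : ℝ, 1 ≤ T ∧ (4 * Real.pi * T) ^ (-(n : ℝ) / 2) ≤ β := by
  have hy : 0 < (n : ℝ) / 2 := by
    have : (1 : ℝ) ≤ n := by exact_mod_cast hn
    linarith
  have h1 : Tendsto (fun s : ℝ => s ^ (-((n : ℝ) / 2))) atTop (nhds 0) :=
    tendsto_rpow_neg_atTop hy
  have h3 : Tendsto (fun T : ℝ => 4 * Real.pi * T) atTop atTop :=
    Tendsto.const_mul_atTop (by positivity) tendsto_id
  have h2 : Tendsto (fun T : ℝ => (4 * Real.pi * T) ^ (-(n : ℝ) / 2)) atTop (nhds 0) := by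
    have := h1.comp h3
    simpa [neg_div, Function.comp_def] using this
  have h4 : ∀ᶠ T : ℝ in atTop, (4 * Real.pi * T) ^ (-(n : ℝ) / 2) < β :=
    h2.eventually (gt_mem_nhds hβ)
  obtain ⟨T, hT1, hT2⟩ := ((eventually_ge_atTop (1:ℝ)).and h4).exists
  exact ⟨T, hT1, hT2.le⟩

lemma exists_M {R T c β : ℝ} (hT : 0 < T) (hβ : 0 < β) (hc : 0 ≤ c) :
    ∃ M : ℝ, R ≤ M ∧ 0 ≤ M ∧ c * Real.exp (-(M - R) ^ 2 / (4 * T)) ≤ β := by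
  have h1 : Tendsto (fun M : ℝ => M - R) atTop atTop :=
    by simpa [sub_eq_add_neg] using tendsto_atTop_add_const_right _ (-R) (tendsto_id (α := ℝ))
  have h2 : Tendsto (fun M : ℝ => (M - R) ^ 2) atTop atTop :=
    (tendsto_pow_atTop (two_ne_zero)).comp h1
  have h3 : Tendsto (fun M : ℝ => (M - R) ^ 2 / (4 * T)) atTop atTop :=
    h2.atTop_div_const (by positivity)
  have h4 : Tendsto (fun M : ℝ => -((M - R) ^ 2 / (4 * T))) atTop atBot :=
    tendsto_neg_atTop_atBot.comp h3
  have h5 : Tendsto (fun M : ℝ => Real.exp (-((M - R) ^ 2 / (4 * T)))) atTop (nhds 0) :=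
    Real.tendsto_exp_atBot.comp h4
  have h6 : Tendsto (fun M : ℝ => c * Real.exp (-((M - R) ^ 2 / (4 * T)))) atTop (nhds 0) := by
    simpa using h5.const_mul c
  have h7 : ∀ᶠ M : ℝ in atTop, c * Real.exp (-((M - R) ^ 2 / (4 * T))) < β :=
    h6.eventually (gt_mem_nhds hβ)
  obtain ⟨M, ⟨hM1, hM2⟩, hM3⟩ :=
    (((eventually_ge_atTop R).and (eventually_ge_atTop (0:ℝ))).and h7).exists
  refine ⟨M, hM1, hM2, ?_⟩
  rw [neg_div]
  exact hM3.le

lemma uniform_Gk {a M T R : ℝ} (ha : 0 < a) {ε : ℝ} (hε : 0 < ε) :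
    ∃ δ > 0, ∀ p ∈ (closedBall (0 : E) M ×ˢ Icc a T : Set (E × ℝ)),
      ∀ q ∈ (closedBall (0 : E) M ×ˢ Icc a T : Set (E × ℝ)), dist p q < δ →
      ∀ x ∈ closedBall (0 : E) R, |Gk n p x - Gk n q x| ≤ ε := by
  set K : Set ((E × ℝ) × E) :=
    (closedBall (0 : E) M ×ˢ Icc a T) ×ˢ closedBall (0 : E) R with hK
  have hKc : IsCompact K :=
    (((isCompact_closedBall _ _).prod isCompact_Icc).prod (isCompact_closedBall _ _))
  have hpos : ∀ q ∈ K, (0:ℝ) < q.1.2 := fun q hq => lt_of_lt_of_le ha hq.1.2.1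
  have hcont : ContinuousOn (fun q : (E × ℝ) × E => Gk n q.1 q.2) K := by
    apply ContinuousOn.mul
    · apply ContinuousOn.rpow_const
      · exact (continuous_const.mul ((continuous_snd.comp continuous_fst))).continuousOn
      · intro q hq
        left
        have := hpos q hq
        positivity
    · apply Real.continuous_exp.comp_continuousOn
      apply ContinuousOn.div
      · exact ((((continuous_snd.sub
          (continuous_fst.comp continuous_fst)).norm.pow 2)).neg).continuousOn
      · exact (continuous_const.mul (continuous_snd.comp continuous_fst)).continuousOn
      · intro q hq
        have := hpos q hq
        positivity
  have hu : UniformContinuousOn (fun q : (E × ℝ) × E => Gk n q.1 q.2) K :=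
    hKc.uniformContinuousOn_of_continuous hcont
  rw [Metric.uniformContinuousOn_iff] at hu
  obtain ⟨δ, hδ, hu⟩ := hu ε hε
  refine ⟨δ, hδ, fun p hp q hq hpq x hx => ?_⟩
  have h1 : ((p, x) : (E × ℝ) × E) ∈ K := ⟨hp, hx⟩
  have h2 : ((q, x) : (E × ℝ) × E) ∈ K := ⟨hq, hx⟩
  have hd : dist ((p, x) : (E × ℝ) × E) ((q, x) : (E × ℝ) × E) < δ := by
    rw [Prod.dist_eq]
    simpa [max_eq_left dist_nonneg] using hpq
  have := hu _ h1 _ h2 hd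
  rw [Real.dist_eq] at this
  exact this.le

lemma integral_Gk_close {a R : ℝ} (ha : 0 < a) (ν : Measure E) [IsFiniteMeasure ν]
    (hs : ν (closedBall (0 : E) R)ᶜ = 0) {ε : ℝ}
    {p q : E × ℝ} (hpa : a ≤ p.2) (hqa : a ≤ q.2)
    (h : ∀ x ∈ closedBall (0 : E) R, |Gk n p x - Gk n q x| ≤ ε) :
    |∫ x, Gk n p x ∂ν - ∫ x, Gk n q x ∂ν| ≤ ε * (ν univ).toReal := by
  have hp2 : 0 < p.2 := lt_of_lt_of_le ha hpa
  have hq2 : 0 < q.2 := lt_of_lt_of_le ha hqa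
  have hsub : ∫ x, Gk n p x ∂ν - ∫ x, Gk n q x ∂ν
      = ∫ x, (Gk n p x - Gk n q x) ∂ν :=
    (integral_sub (integrable_Gk ν hp2) (integrable_Gk ν hq2)).symm
  rw [hsub]
  calc |∫ x, (Gk n p x - Gk n q x) ∂ν| ≤ ∫ x, |Gk n p x - Gk n q x| ∂ν :=
        by simpa [Real.norm_eq_abs] using
          norm_integral_le_integral_norm (μ := ν) (fun x => Gk n p x - Gk n q x)
    _ ≤ ∫ _x, ε ∂ν := by
        apply integral_mono_ae
        · exact ((integrable_Gk ν hp2).sub (integrable_Gk ν hq2)).abs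
        · exact integrable_const _
        · filter_upwards [ae_mem_ball ν hs] with x hx
          exact h x hx
    _ = ε * (ν univ).toReal := by rw [integral_const]; simp [smul_eq_mul, mul_comm, measureReal_def]

lemma abs_ciSup_sub_ciSup_le {ι : Sort*} [Nonempty ι] {f g : ι → ℝ} {ε : ℝ}
    (hf : BddAbove (range f)) (hg : BddAbove (range g))
    (h : ∀ i, |f i - g i| ≤ ε) : |(⨆ i, f i) - ⨆ i, g i| ≤ ε := by
  rw [abs_le]
  constructor
  · have h1 : (⨆ i, g i) ≤ (⨆ i, f i) + ε := by
      apply ciSup_le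
      intro i
      have h2 := (abs_le.mp (h i)).1
      have h3 : g i ≤ f i + ε := by linarith
      exact h3.trans (add_le_add_left (le_ciSup hf i) ε)
    linarith
  · have h1 : (⨆ i, f i) ≤ (⨆ i, g i) + ε := by
      apply ciSup_le
      intro i
      have h2 := (abs_le.mp (h i)).2
      have h3 : f i ≤ g i + ε := by linarith
      exact h3.trans (add_le_add_left (le_ciSup hg i) ε)
    linarith

lemma bddAbove_supQ {a M T : ℝ} (ha : 0 < a) (ν : Measure E) [IsFiniteMeasure ν] :
    BddAbove (range fun p : (closedBall (0 : E) M ×ˢ Icc a T : Set (E × ℝ)) =>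
      ∫ x, Gk n (p : E × ℝ) x ∂ν) := by
  refine ⟨(4 * Real.pi * a) ^ (-(n : ℝ) / 2) * (ν univ).toReal, ?_⟩
  rintro y ⟨⟨p, hp⟩, rfl⟩
  show ∫ x, Gk n p x ∂ν ≤ _
  rw [← Ffn_eq ν p]
  exact Ffn_le_B ν ha _ hp.2.1

lemma eventually_close {R a M T : ℝ} (hR : 0 < R) (ha : 0 < a)
    (μs : ℕ → Measure E) (μ : Measure E)
    [∀ i, IsFiniteMeasure (μs i)] [IsFiniteMeasure μ]
    (hsupp_i : ∀ i, μs i (closedBall (0 : E) R)ᶜ = 0)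
    (hsupp : μ (closedBall (0 : E) R)ᶜ = 0)
    (hconv : ∀ g : E → ℝ, Continuous g → HasCompactSupport g →
      Tendsto (fun i => ∫ x, g x ∂(μs i)) atTop (nhds (∫ x, g x ∂μ)))
    {ε : ℝ} (hε : 0 < ε) :
    ∀ᶠ i in atTop, ∀ p ∈ (closedBall (0 : E) M ×ˢ Icc a T : Set (E × ℝ)),
      |∫ x, Gk n p x ∂(μs i) - ∫ x, Gk n p x ∂μ| ≤ ε := by
  set m := (μ univ).toReal with hm'
  have hm : 0 ≤ m := ENNReal.toReal_nonneg
  set C : ℝ := m + 1 with hC'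
  have hC : 0 < C := by linarith
  set ε' : ℝ := ε / (3 * C) with hε''
  have hε' : 0 < ε' := by positivity
  have hε'C : ε' * C = ε / 3 := by
    rw [hε'']
    field_simp
  obtain ⟨δ, hδ, hδ2⟩ := uniform_Gk (a := a) (M := M) (T := T) (R := R) (n := n) ha hε'
  obtain ⟨s, hsQ, hsfin, hscov⟩ :=
    (((isCompact_closedBall (0 : E) M).prod (isCompact_Icc (a := a) (b := T)))).finite_cover_balls hδ
  have hev1 : ∀ᶠ i in atTop, ∀ y ∈ s,
      |∫ x, Gk n y x ∂(μs i) - ∫ x, Gk n y x ∂μ| < ε / 3 := by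
    rw [eventually_all_finite hsfin]
    intro y _
    have h := tendsto_integral_Gk hR μs μ hsupp_i hsupp hconv y
    have h2 := h.eventually (Metric.ball_mem_nhds _ (by positivity : (0:ℝ) < ε / 3))
    filter_upwards [h2] with i hi
    simp only [Metric.mem_ball, Real.dist_eq] at hi
    exact hi
  have hev2 : ∀ᶠ i in atTop, ((μs i) univ).toReal ≤ C := by
    have h := tendsto_mass hR μs μ hsupp_i hsupp hconv
    have h2 := h.eventually (gt_mem_nhds (lt_add_one m))
    filter_upwards [h2] with i hi
    exact hi.le
  filter_upwards [hev1, hev2] with i h1 h2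
  intro p hp
  have hpcov := hscov hp
  simp only [mem_iUnion, mem_ball, exists_prop] at hpcov
  obtain ⟨y, hy, hpy⟩ := hpcov
  have hyQ := hsQ hy
  have t1 : |∫ x, Gk n p x ∂(μs i) - ∫ x, Gk n y x ∂(μs i)| ≤ ε' * ((μs i) univ).toReal :=
    integral_Gk_close ha (μs i) (hsupp_i i) hp.2.1 hyQ.2.1 (hδ2 p hp y hyQ hpy)
  have t1' : ε' * ((μs i) univ).toReal ≤ ε / 3 := by
    rw [← hε'C]
    exact mul_le_mul_of_nonneg_left h2 hε'.le
  have t2 : |∫ x, Gk n y x ∂(μs i) - ∫ x, Gk n y x ∂μ| < ε / 3 := h1 y hy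
  have t3 : |∫ x, Gk n y x ∂μ - ∫ x, Gk n p x ∂μ| ≤ ε' * m := by
    apply integral_Gk_close ha μ hsupp hyQ.2.1 hp.2.1
    apply hδ2 y hyQ p hp
    rw [dist_comm]
    exact hpy
  have t3' : ε' * m ≤ ε / 3 := by
    rw [← hε'C]
    apply mul_le_mul_of_nonneg_left _ hε'.le
    linarith
  have tri : |∫ x, Gk n p x ∂(μs i) - ∫ x, Gk n p x ∂μ|
      ≤ |∫ x, Gk n p x ∂(μs i) - ∫ x, Gk n y x ∂(μs i)|
        + |∫ x, Gk n y x ∂(μs i) - ∫ x, Gk n y x ∂μ|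
        + |∫ x, Gk n y x ∂μ - ∫ x, Gk n p x ∂μ| := by
    have a1 := abs_sub_le (∫ x, Gk n p x ∂(μs i)) (∫ x, Gk n y x ∂(μs i)) (∫ x, Gk n p x ∂μ)
    have a2 := abs_sub_le (∫ x, Gk n y x ∂(μs i)) (∫ x, Gk n y x ∂μ) (∫ x, Gk n p x ∂μ)
    linarith
  linarith

lemma tails_lemma {R a T M : ℝ} (hR : 0 < R) (ha : 0 < a)
    (h1T : (1:ℝ) ≤ T) (hRM : R ≤ M)
    (hTβ : (4 * Real.pi * T) ^ (-(n : ℝ) / 2)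
      ≤ (4 * Real.pi * 1) ^ (-(n : ℝ) / 2) * Real.exp (-R ^ 2 / (4 * 1)))
    (hMβ : (4 * Real.pi * a) ^ (-(n : ℝ) / 2) * Real.exp (-(M - R) ^ 2 / (4 * T))
      ≤ (4 * Real.pi * 1) ^ (-(n : ℝ) / 2) * Real.exp (-R ^ 2 / (4 * 1)))
    (ν : Measure E) [IsFiniteMeasure ν] (hs : ν (closedBall (0 : E) R)ᶜ = 0) :
    (∀ p : E × ℝ, T ≤ p.2 → ∫ x, Gk n p x ∂ν ≤ ∫ x, Gk n ((0 : E), 1) x ∂ν) ∧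
    (∀ p : E × ℝ, a ≤ p.2 → p.2 ≤ T → M < ‖p.1‖ →
      ∫ x, Gk n p x ∂ν ≤ ∫ x, Gk n ((0 : E), 1) x ∂ν) := by
  have hT0 : (0:ℝ) < T := lt_of_lt_of_le one_pos h1T
  have hm : 0 ≤ (ν univ).toReal := ENNReal.toReal_nonneg
  have hlow := integral_Gk_lower (R := R) ν hs
  constructor
  · intro p hTp
    have hp2 : 0 < p.2 := lt_of_lt_of_le hT0 hTp
    calc ∫ x, Gk n p x ∂ν
        ≤ (4 * Real.pi * p.2) ^ (-(n : ℝ) / 2) * (ν univ).toReal := integral_Gk_le ν hp2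
      _ ≤ (4 * Real.pi * T) ^ (-(n : ℝ) / 2) * (ν univ).toReal :=
          mul_le_mul_of_nonneg_right (rpow_const_anti hT0 hTp) hm
      _ ≤ (4 * Real.pi * 1) ^ (-(n : ℝ) / 2) * Real.exp (-R ^ 2 / (4 * 1))
            * (ν univ).toReal := mul_le_mul_of_nonneg_right hTβ hm
      _ ≤ _ := hlow
  · intro p hap hpT hMp
    calc ∫ x, Gk n p x ∂ν
        ≤ (4 * Real.pi * a) ^ (-(n : ℝ) / 2) * Real.exp (-(M - R) ^ 2 / (4 * T))
            * (ν univ).toReal := integral_Gk_far ν hs hR.le hRM ha hap hpT hMp.le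
      _ ≤ (4 * Real.pi * 1) ^ (-(n : ℝ) / 2) * Real.exp (-R ^ 2 / (4 * 1))
            * (ν univ).toReal := mul_le_mul_of_nonneg_right hMβ hm
      _ ≤ _ := hlow

theorem stmt_12 (n : ℕ) (hn : 1 ≤ n) (R : ℝ) (hR : 0 < R) (a : ℝ) (ha : 0 < a) (ha1 : a < 1)
    (μs : ℕ → Measure (EuclideanSpace ℝ (Fin (n + 1))))
    (μ : Measure (EuclideanSpace ℝ (Fin (n + 1))))
    [∀ i, IsFiniteMeasure (μs i)] [IsFiniteMeasure μ] (hμ : μ ≠ 0)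
    (hsupp_i : ∀ i, μs i (closedBall (0 : EuclideanSpace ℝ (Fin (n + 1))) R)ᶜ = 0)
    (hsupp : μ (closedBall (0 : EuclideanSpace ℝ (Fin (n + 1))) R)ᶜ = 0)
    (hconv : ∀ g : EuclideanSpace ℝ (Fin (n + 1)) → ℝ, Continuous g → HasCompactSupport g →
      Tendsto (fun i => ∫ x, g x ∂(μs i)) atTop (nhds (∫ x, g x ∂μ))) :
    Tendsto (fun i => localEntropyR n (Ici a) (μs i)) atTop
      (nhds (localEntropyR n (Ici a) μ)) := by
  classical
  set β : ℝ := (4 * Real.pi * 1) ^ (-(n : ℝ) / 2) * Real.exp (-R ^ 2 / (4 * 1)) with hβ'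
  have hβ : 0 < β := by positivity
  obtain ⟨T, h1T, hTβ⟩ := exists_T (n := n) hn hβ
  have hT0 : (0:ℝ) < T := lt_of_lt_of_le one_pos h1T
  obtain ⟨M, hRM, hM0, hMβ⟩ := exists_M (R := R) (T := T)
      (c := (4 * Real.pi * a) ^ (-(n : ℝ) / 2)) hT0 hβ (Real.rpow_nonneg (by positivity) _)
  have key : ∀ (ν : Measure (EuclideanSpace ℝ (Fin (n + 1)))), ∀ _ : IsFiniteMeasure ν,
      ν (closedBall (0 : EuclideanSpace ℝ (Fin (n + 1))) R)ᶜ = 0 →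
      localEntropyR n (Ici a) ν
        = ⨆ p : (closedBall (0 : EuclideanSpace ℝ (Fin (n + 1))) M ×ˢ Icc a T :
            Set (EuclideanSpace ℝ (Fin (n + 1)) × ℝ)),
            ∫ x, Gk n (p : EuclideanSpace ℝ (Fin (n + 1)) × ℝ) x ∂ν := by
    intro ν hfin hs
    obtain ⟨ht1, ht2⟩ := tails_lemma hR ha h1T hRM hTβ hMβ ν hs
    exact localEntropy_eq_sup ν ha ha1.le h1T hM0 ht1 ht2
  haveI hQne : Nonempty ((closedBall (0 : EuclideanSpace ℝ (Fin (n + 1))) M ×ˢ Icc a T :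
      Set (EuclideanSpace ℝ (Fin (n + 1)) × ℝ))) := by
    refine ⟨⟨((0 : EuclideanSpace ℝ (Fin (n + 1))), (1:ℝ)), ?_, ?_⟩⟩
    · simpa using hM0
    · exact ⟨ha1.le, h1T⟩
  rw [Metric.tendsto_nhds]
  intro ε hε
  have hev := eventually_close (M := M) (T := T) hR ha μs μ hsupp_i hsupp hconv
    (ε := ε / 2) (by positivity)
  filter_upwards [hev] with i hi
  rw [Real.dist_eq, key (μs i) inferInstance (hsupp_i i), key μ inferInstance hsupp]
  have hb := abs_ciSup_sub_ciSup_le (bddAbove_supQ (M := M) (T := T) ha (μs i))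
    (bddAbove_supQ (M := M) (T := T) ha μ) (fun p => hi (p : _) p.2)
  calc |_ - _| ≤ ε / 2 := hb
    _ < ε := by linarith
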